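/- Let α, β : ℤ × ℤ → ℂ be double sequences such that β is antisymmetric (β(n,k) = −β(k,n) for all n,k) and α(p,p) ≠ 0 for every integer p. Then α and β satisfy the triple sum identity (TSI) if and only if for all integers x, y, p: α(p,x)·β(y,p) + α(p,y)·β(p,x) + α(p,p)·β(x,y) = 0. -/
import Mathlib

/-- Lemma 3.3 (Wang–Ma): for antisymmetric `β` with `α p p ≠ 0` for all `p`,
the triple sum identity holds if and only if
`α p x * β y p + α p y * β p x + α p p * β x y = 0` for all integers `x, y, p`. -/
theorem TSI_iff_three_term
    (α β : ℤ → ℤ → ℂ)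
    (hanti : ∀ n k : ℤ, β n k = -β k n)
    (hα : ∀ p : ℤ, α p p ≠ 0) :
    (∀ n k p q : ℤ, α n p * β q k + α n q * β k p + α n k * β p q = 0)
      ↔ (∀ x y p : ℤ, α p x * β y p + α p y * β p x + α p p * β x y = 0) := by
  constructor
  · intro h x y p
    exact h p p x y
  · intro h n k p q
    have key : ∀ x y : ℤ, α n n * β x y = α n x * β n y - α n y * β n x := by
      intro x y
      have h1 := h x y n
      linear_combination h1 - α n x * hanti y n
    apply mul_left_cancel₀ (hα n)
    rw [mul_zero]
    linear_combination α n p * key q k + α n q * key k p + α n k * key p q
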